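/- arXiv:1505.00819 — 2 statements merged into one kernel-verified Lean document; each statement's English description precedes it below -/
import Mathlib

section
/- Suppose sup_i F̂_{d,i}(h) ≤ f̂·h for all h ≤ h₀, where F̂_{d,i} is the CDF of the independent nonnegative random variable d̂_i, and let K ≥ 1, f̂ ≥ 1, h₀ ∈ (0, 1/f̂). If L ≥ max(2 f̂ K², 4 f̂ K/√η) for some η ∈ (0,1), then for all n with K/√n ≤ h₀, P( Σ_{i=1}^{⌊K√n⌋} 1(d̂_i ≤ K/√n) > L ) < η/2. -/
open MeasureTheory ProbabilityTheory

/-- Core estimate in Proposition 5.15: if the residual deadlines `d̂_i` are independent with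
CDFs uniformly bounded by `f̂·h` near zero, and `L ≥ max(2 f̂ K², 4 f̂ K/√η)`, then the
probability that more than `L` of the first `⌊K√n⌋` initial jobs have deadline `≤ K/√n` is
less than `η/2`, whenever `K/√n ≤ h₀`. -/
theorem stmt12 {Ω : Type*} [MeasurableSpace Ω] (P : Measure Ω) [IsProbabilityMeasure P]
    (dhat : ℕ → Ω → ℝ) (hmeas : ∀ i, Measurable (dhat i))
    (hnn : ∀ i ω, 0 ≤ dhat i ω)
    (hindep : iIndepFun dhat P)
    (fhat h₀ K η L : ℝ) (hK : 1 ≤ K) (hfhat : 1 ≤ fhat)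
    (hh₀ : h₀ ∈ Set.Ioo (0:ℝ) (1 / fhat)) (hη : η ∈ Set.Ioo (0:ℝ) 1)
    (hcdf : ∀ i, ∀ h : ℝ, 0 < h → h ≤ h₀ →
      P {ω | dhat i ω ≤ h} ≤ ENNReal.ofReal (fhat * h))
    (hL : max (2 * fhat * K ^ 2) (4 * fhat * K / Real.sqrt η) ≤ L) :
    ∀ n : ℕ, K / Real.sqrt n ≤ h₀ →
      P {ω | L < ∑ i ∈ Finset.range ⌊K * Real.sqrt n⌋₊,
          (if dhat i ω ≤ K / Real.sqrt n then (1:ℝ) else 0)} <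
        ENNReal.ofReal (η / 2) := by
  intro n hn
  have hη2 : (0:ℝ) < η / 2 := by linarith [hη.1]
  have hL1 : 2 * fhat * K ^ 2 ≤ L := le_trans (le_max_left _ _) hL
  have hLpos : (0:ℝ) < L := by nlinarith
  rcases Nat.eq_zero_or_pos n with hn0 | hn0
  · subst hn0
    have hset : {ω | L < ∑ i ∈ Finset.range ⌊K * Real.sqrt (0:ℕ)⌋₊,
        (if dhat i ω ≤ K / Real.sqrt (0:ℕ) then (1:ℝ) else 0)} = ∅ := by
      ext ω
      simp only [Set.mem_setOf_eq, Set.mem_empty_iff_false, iff_false, not_lt,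
        Nat.cast_zero, Real.sqrt_zero, mul_zero, Nat.floor_zero, Finset.range_zero,
        Finset.sum_empty]
      exact hLpos.le
    rw [hset, measure_empty]
    exact ENNReal.ofReal_pos.mpr hη2
  -- main case
  have hspos : 0 < Real.sqrt n := Real.sqrt_pos.mpr (by exact_mod_cast hn0)
  set h : ℝ := K / Real.sqrt n with hhdef
  have hhpos : 0 < h := div_pos (by linarith) hspos
  set m : ℕ := ⌊K * Real.sqrt n⌋₊ with hmdef
  have hmle : (m : ℝ) ≤ K * Real.sqrt n := Nat.floor_le (by positivity)
  set X : ℕ → Ω → ℝ := fun i ω => if dhat i ω ≤ h then (1:ℝ) else 0 with hXdef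
  have hXmeas : ∀ i, Measurable (X i) := fun i =>
    Measurable.ite ((hmeas i) measurableSet_Iic) measurable_const measurable_const
  have hXmem : ∀ i, MemLp (X i) 2 P := fun i =>
    MemLp.of_bound (hXmeas i).aestronglyMeasurable 1
      (Filter.Eventually.of_forall fun ω => by
        simp only [hXdef]; split <;> simp)
  have hXsq : ∀ i, (X i) ^ 2 = X i := fun i => by
    funext ω
    simp only [Pi.pow_apply, hXdef]
    split <;> norm_num
  -- expectation of each indicator
  have hA : ∀ i, MeasurableSet {ω | dhat i ω ≤ h} := fun i => (hmeas i) measurableSet_Iic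
  have hEX : ∀ i, P[X i] = (P {ω | dhat i ω ≤ h}).toReal := by
    intro i
    have : X i = Set.indicator {ω | dhat i ω ≤ h} (fun _ => (1:ℝ)) := by
      funext ω; simp [hXdef, Set.indicator_apply]
    rw [this, integral_indicator_const _ (hA i)]
    simp [measureReal_def]
  have hEXle : ∀ i, P[X i] ≤ fhat * h := by
    intro i
    rw [hEX i]
    exact ENNReal.toReal_le_of_le_ofReal (by positivity) (hcdf i h hhpos hn)
  have hEXnn : ∀ i, 0 ≤ P[X i] := fun i => by rw [hEX i]; exact ENNReal.toReal_nonneg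
  -- bound on m * (fhat * h)
  have hmh : (m : ℝ) * (fhat * h) ≤ fhat * K ^ 2 := by
    have h1 : (m : ℝ) * h ≤ K ^ 2 := by
      have h2 : (m : ℝ) * h ≤ (K * Real.sqrt n) * h :=
        mul_le_mul_of_nonneg_right hmle hhpos.le
      have h3 : (K * Real.sqrt n) * h = K ^ 2 := by
        rw [hhdef]; field_simp
      linarith
    nlinarith
  -- the sum
  set S : Ω → ℝ := ∑ i ∈ Finset.range m, X i with hSdef
  have hSmem : MemLp S 2 P := memLp_finset_sum' _ fun i _ => hXmem i
  have hSapp : ∀ ω, S ω = ∑ i ∈ Finset.range m, X i ω := fun ω => by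
    rw [hSdef]; exact Finset.sum_apply ω _ _
  have hES : P[S] = ∑ i ∈ Finset.range m, P[X i] := by
    rw [hSdef]
    simp only [Finset.sum_apply]
    exact integral_finset_sum _ fun i _ => (hXmem i).integrable one_le_two
  have hESle : P[S] ≤ fhat * K ^ 2 := by
    rw [hES]
    calc ∑ i ∈ Finset.range m, P[X i] ≤ ∑ _i ∈ Finset.range m, (fhat * h) :=
          Finset.sum_le_sum fun i _ => hEXle i
      _ = (m : ℝ) * (fhat * h) := by rw [Finset.sum_const, Finset.card_range]; ring
      _ ≤ fhat * K ^ 2 := hmh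
  have hESnn : 0 ≤ P[S] := by
    rw [hES]; exact Finset.sum_nonneg fun i _ => hEXnn i
  -- variance bound
  have hpair : Set.Pairwise ↑(Finset.range m) fun i j => IndepFun (X i) (X j) P := by
    intro i _ j _ hij
    exact (hindep.comp (fun _ x => if x ≤ h then (1:ℝ) else 0)
      (fun _ => Measurable.ite measurableSet_Iic measurable_const measurable_const)).indepFun hij
  have hVar : variance S P ≤ fhat * K ^ 2 := by
    rw [hSdef, IndepFun.variance_sum (fun i _ => hXmem i) hpair]
    calc ∑ i ∈ Finset.range m, variance (X i) P
        ≤ ∑ i ∈ Finset.range m, P[X i] := by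
          refine Finset.sum_le_sum fun i _ => ?_
          have := variance_le_expectation_sq (μ := P) (hXmeas i).aestronglyMeasurable
          rwa [hXsq i] at this
      _ ≤ (m : ℝ) * (fhat * h) := by
          calc ∑ i ∈ Finset.range m, P[X i] ≤ ∑ _i ∈ Finset.range m, (fhat * h) :=
                Finset.sum_le_sum fun i _ => hEXle i
            _ = (m : ℝ) * (fhat * h) := by rw [Finset.sum_const, Finset.card_range]; ring
      _ ≤ fhat * K ^ 2 := hmh
  have hVarnn : 0 ≤ variance S P := variance_nonneg _ _
  -- L² η ≥ 16 fhat² K²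
  have hL2 : 16 * fhat ^ 2 * K ^ 2 ≤ L ^ 2 * η := by
    have hsqη : 0 < Real.sqrt η := Real.sqrt_pos.mpr hη.1
    have h4 : 4 * fhat * K ≤ L * Real.sqrt η :=
      (div_le_iff₀ hsqη).mp (le_trans (le_max_right _ _) hL)
    have h5 : (4 * fhat * K) * (4 * fhat * K) ≤ (L * Real.sqrt η) * (L * Real.sqrt η) :=
      mul_le_mul h4 h4 (by positivity) (by positivity)
    have h6 : Real.sqrt η * Real.sqrt η = η := Real.mul_self_sqrt hη.1.le
    nlinarith
  -- Chebyshev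
  have hc : (0:ℝ) < L / 2 := by linarith
  have hsub : {ω | L < ∑ i ∈ Finset.range ⌊K * Real.sqrt n⌋₊,
      (if dhat i ω ≤ K / Real.sqrt n then (1:ℝ) else 0)} ⊆
      {ω | L / 2 ≤ |S ω - P[S]|} := by
    intro ω hω
    simp only [Set.mem_setOf_eq] at hω ⊢
    have hSω : L < S ω := by rw [hSapp ω]; exact hω
    have : L / 2 ≤ S ω - P[S] := by linarith
    exact le_trans this (le_abs_self _)
  calc P {ω | L < ∑ i ∈ Finset.range ⌊K * Real.sqrt n⌋₊,
        (if dhat i ω ≤ K / Real.sqrt n then (1:ℝ) else 0)}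
      ≤ P {ω | L / 2 ≤ |S ω - P[S]|} := measure_mono hsub
    _ ≤ ENNReal.ofReal (variance S P / (L / 2) ^ 2) :=
        meas_ge_le_variance_div_sq hSmem hc
    _ < ENNReal.ofReal (η / 2) := by
        rw [ENNReal.ofReal_lt_ofReal_iff hη2]
        rw [div_lt_iff₀ (by positivity : (0:ℝ) < (L / 2) ^ 2)]
        nlinarith [hVar, hL2, sq_nonneg L, sq_nonneg K]
end

section
/- For the workload dynamics W(t) = W(0) − T(t) + Σ_{i=1}^{A(t)} (v_i/μ)·J_i with T(t) = ∫₀^t 1(Q(s)>0) ds and J_i ∈ {0,1}, the idle time increase over [u,v] satisfies I(v) − I(u) ≤ max(0, − inf_{s∈[u,v]} ( Σ_{i=A(u)+1}^{A(s)} (v_i/μ)·J_i − (s − u) ) ), where I(t) = t − T(t). -/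
open MeasureTheory Set

/-- Pathwise bound on idleness accumulation (eq. tightnessW.2.2): for a single-server queue
with workload `W(t) = W(0) − T(t) + Σ_{i=1}^{A(t)} (v_i/μ) J_i`,
`I(v) − I(u) ≤ max(0, −inf_{s∈[u,v]} (Σ_{i=A(u)+1}^{A(s)} (v_i/μ) J_i − (s − u)))`. -/
theorem stmt19 (μ : ℝ) (hμ : 0 < μ) (A : ℝ → ℕ) (hA : MonotoneOn A (Set.Ici 0))
    (sv J : ℕ → ℝ) (hsv : ∀ i, 0 ≤ sv i) (hJ : ∀ i, J i = 0 ∨ J i = 1)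
    (Q W T I : ℝ → ℝ) (hQmeas : Measurable Q)
    (hT : ∀ t, T t = ∫ s in Set.Ioc (0:ℝ) t, (if 0 < Q s then (1:ℝ) else 0))
    (hI : ∀ t, I t = t - T t)
    (hW : ∀ t : ℝ, 0 ≤ t → W t = W 0 - T t + ∑ i ∈ Finset.Icc 1 (A t), (sv i / μ) * J i)
    (hWnn : ∀ t : ℝ, 0 ≤ t → 0 ≤ W t)
    (hQW : ∀ t : ℝ, 0 ≤ t → (0 < Q t ↔ 0 < W t))
    (u v : ℝ) (hu : 0 ≤ u) (huv : u ≤ v) :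
    I v - I u ≤ max 0 (- sInf ((fun s =>
      (∑ i ∈ Finset.Ioc (A u) (A s), (sv i / μ) * J i) - (s - u)) '' Set.Icc u v)) := by
  classical
  set S : Set ℝ := {s | 0 < Q s} with hSdef
  have hSmeas : MeasurableSet S := measurableSet_lt measurable_const hQmeas
  -- T as a measure
  have hTm : ∀ t, T t = (volume (Set.Ioc 0 t ∩ S)).toReal := by
    intro t
    rw [hT t]
    have h1 : ∀ s : ℝ, (if 0 < Q s then (1:ℝ) else 0) = S.indicator (fun _ => (1:ℝ)) s := by
      intro s
      simp [Set.indicator_apply, hSdef, Set.mem_setOf_eq]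
    simp_rw [h1]
    rw [MeasureTheory.setIntegral_indicator hSmeas, MeasureTheory.setIntegral_const]
    simp
    rfl
  -- measure of pieces is finite
  have hfin : ∀ a b : ℝ, volume (Set.Ioc a b ∩ S) < ⊤ := by
    intro a b
    exact lt_of_le_of_lt (measure_mono Set.inter_subset_left) measure_Ioc_lt_top
  -- increments of T
  have hTdiff : ∀ a b : ℝ, 0 ≤ a → a ≤ b →
      T b - T a = (volume (Set.Ioc a b ∩ S)).toReal := by
    intro a b ha hab
    have hsplit : Set.Ioc 0 b ∩ S = (Set.Ioc 0 a ∩ S) ∪ (Set.Ioc a b ∩ S) := by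
      rw [← Set.union_inter_distrib_right, Set.Ioc_union_Ioc_eq_Ioc ha hab]
    have hdisj : Disjoint (Set.Ioc 0 a ∩ S) (Set.Ioc a b ∩ S) := by
      apply Set.disjoint_of_subset Set.inter_subset_left Set.inter_subset_left
      exact Set.Ioc_disjoint_Ioc_of_le le_rfl
    have hm : volume (Set.Ioc 0 b ∩ S)
        = volume (Set.Ioc 0 a ∩ S) + volume (Set.Ioc a b ∩ S) := by
      rw [hsplit, measure_union hdisj (measurableSet_Ioc.inter hSmeas)]
    rw [hTm a, hTm b, hm, ENNReal.toReal_add (hfin 0 a).ne (hfin a b).ne]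
    ring
  have hIncNN : ∀ a b : ℝ, (0:ℝ) ≤ (volume (Set.Ioc a b ∩ S)).toReal :=
    fun a b => ENNReal.toReal_nonneg
  have hIncLe : ∀ a b : ℝ, a ≤ b → (volume (Set.Ioc a b ∩ S)).toReal ≤ b - a := by
    intro a b hab
    have : volume (Set.Ioc a b ∩ S) ≤ volume (Set.Ioc a b) :=
      measure_mono Set.inter_subset_left
    calc (volume (Set.Ioc a b ∩ S)).toReal ≤ (volume (Set.Ioc a b)).toReal :=
          ENNReal.toReal_mono measure_Ioc_lt_top.ne this
      _ = b - a := by rw [Real.volume_Ioc, ENNReal.toReal_ofReal (by linarith)]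
  have hIncFull : ∀ a b : ℝ, a ≤ b → Set.Ioc a b ⊆ S →
      (volume (Set.Ioc a b ∩ S)).toReal = b - a := by
    intro a b hab hsub
    rw [Set.inter_eq_left.mpr hsub, Real.volume_Ioc, ENNReal.toReal_ofReal (by linarith)]
  -- the increment sum
  set Sig : ℝ → ℝ := fun s => ∑ i ∈ Finset.Ioc (A u) (A s), (sv i / μ) * J i with hSig
  have hSignn : ∀ s, 0 ≤ Sig s := by
    intro s
    apply Finset.sum_nonneg
    intro i _
    have hJnn : 0 ≤ J i := by rcases hJ i with h | h <;> simp [h]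
    exact mul_nonneg (div_nonneg (hsv i) hμ.le) hJnn
  have hWdiff : ∀ s : ℝ, u ≤ s → W s - W u = -(T s - T u) + Sig s := by
    intro s hs
    have hs0 : (0:ℝ) ≤ s := le_trans hu hs
    have hAle : A u ≤ A s := hA hu hs0 hs
    have hsum : ∑ i ∈ Finset.Icc 1 (A u), (sv i / μ) * J i + Sig s
        = ∑ i ∈ Finset.Icc 1 (A s), (sv i / μ) * J i := by
      rw [hSig]
      rw [show Finset.Icc 1 (A u) = Finset.Ioc 0 (A u) from (Finset.Icc_add_one_left_eq_Ioc 0 (A u)),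
          show Finset.Icc 1 (A s) = Finset.Ioc 0 (A s) from (Finset.Icc_add_one_left_eq_Ioc 0 (A s))]
      exact Finset.sum_Ioc_consecutive _ (Nat.zero_le _) hAle
    rw [hW s hs0, hW u hu]
    linarith
  -- bound on I v - I u in terms of any zero of W and the last zero
  rw [hI u, hI v]
  by_cases hZ : ∃ s ∈ Set.Icc u v, W s = 0
  · -- Z nonempty
    set Z : Set ℝ := {s | s ∈ Set.Icc u v ∧ W s = 0} with hZdef
    have hZne : Z.Nonempty := by
      obtain ⟨s, hs, hws⟩ := hZ; exact ⟨s, hs, hws⟩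
    have hZbdd : BddAbove Z := ⟨v, fun s hs => hs.1.2⟩
    set c : ℝ := sSup Z with hc
    have hcu : u ≤ c := by
      obtain ⟨s, hs⟩ := hZne
      exact le_trans hs.1.1 (le_csSup hZbdd hs)
    have hcv : c ≤ v := csSup_le hZne fun s hs => hs.1.2
    -- on (c, v] we have Q > 0
    have hsubS : Set.Ioc c v ⊆ S := by
      intro s hs
      have hsu : u ≤ s := le_trans hcu hs.1.le
      have hs0 : (0:ℝ) ≤ s := le_trans hu hsu
      have hWne : W s ≠ 0 := by
        intro h0
        have : s ∈ Z := ⟨⟨hsu, hs.2⟩, h0⟩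
        exact absurd (le_csSup hZbdd this) (not_le.mpr hs.1)
      have hWpos : 0 < W s := lt_of_le_of_ne (hWnn s hs0) (Ne.symm hWne)
      exact (hQW s hs0).mpr hWpos
    -- final estimate via ε
    have key : ∀ ε : ℝ, 0 < ε →
        v - T v - (u - T u) ≤ max 0 (- sInf ((fun s =>
          (∑ i ∈ Finset.Ioc (A u) (A s), (sv i / μ) * J i) - (s - u)) '' Set.Icc u v)) + ε := by
      intro ε hε
      obtain ⟨s, hsZ, hslt⟩ := exists_lt_of_lt_csSup hZne (show c - ε < c by linarith)
      have hsu : u ≤ s := hsZ.1.1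
      have hsv' : s ≤ v := hsZ.1.2
      have hsc : s ≤ c := le_csSup hZbdd hsZ
      -- T s - T u = W u + Sig s
      have h1 : T s - T u = W u + Sig s := by
        have := hWdiff s hsu
        rw [hsZ.2] at this
        linarith
      -- T v - T c = v - c
      have h2 : T v - T c = v - c := by
        rw [hTdiff c v (le_trans hu hcu) hcv]
        exact hIncFull c v hcv hsubS
      -- T s ≤ T c
      have h3 : T s ≤ T c := by
        have := hTdiff s c (le_trans hu hsu) hsc
        have := hIncNN s c
        linarith
      -- T v - T s ≥ 0 etc; combine
      have hWu : 0 ≤ W u := hWnn u hu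
      have hfs : sInf ((fun s =>
          (∑ i ∈ Finset.Ioc (A u) (A s), (sv i / μ) * J i) - (s - u)) '' Set.Icc u v)
          ≤ Sig s - (s - u) := by
        apply csInf_le
        · refine ⟨u - v, ?_⟩
          rintro x ⟨t, ht, rfl⟩
          have := hSignn t
          simp only [hSig] at this ⊢
          have htv : t ≤ v := ht.2
          have : (0:ℝ) ≤ ∑ i ∈ Finset.Ioc (A u) (A t), (sv i / μ) * J i := this
          linarith
        · exact ⟨s, ⟨hsu, hsv'⟩, rfl⟩
      have hmax : - sInf ((fun s =>
          (∑ i ∈ Finset.Ioc (A u) (A s), (sv i / μ) * J i) - (s - u)) '' Set.Icc u v)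
          ≤ max 0 (- sInf ((fun s =>
          (∑ i ∈ Finset.Ioc (A u) (A s), (sv i / μ) * J i) - (s - u)) '' Set.Icc u v)) :=
        le_max_right _ _
      have hSigfs : Sig s = ∑ i ∈ Finset.Ioc (A u) (A s), (sv i / μ) * J i := rfl
      -- v - T v - (u - T u) = (v-u) - (T v - T u)
      -- T v - T u = (T v - T c) + (T c - T s) + (T s - T u) ≥ (v-c) + 0 + W u + Sig s
      have : v - T v - (u - T u) ≤ (c - u) - Sig s - W u := by linarith
      have : v - T v - (u - T u) ≤ (s - u) + ε - Sig s := by linarith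
      calc v - T v - (u - T u) ≤ -(Sig s - (s - u)) + ε := by linarith
        _ ≤ - sInf ((fun s => (∑ i ∈ Finset.Ioc (A u) (A s), (sv i / μ) * J i) - (s - u))
              '' Set.Icc u v) + ε := by
            rw [hSigfs] at hfs; linarith
        _ ≤ _ := by linarith
    exact le_of_forall_pos_le_add key
  · -- no zero of W on [u,v]: Q > 0 on (u,v]
    push_neg at hZ
    have hsubS : Set.Ioc u v ⊆ S := by
      intro s hs
      have hs0 : (0:ℝ) ≤ s := le_trans hu hs.1.le
      have hWpos : 0 < W s :=
        lt_of_le_of_ne (hWnn s hs0) (Ne.symm (hZ s ⟨hs.1.le, hs.2⟩))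
      exact (hQW s hs0).mpr hWpos
    have h2 : T v - T u = v - u := by
      rw [hTdiff u v hu huv]
      exact hIncFull u v huv hsubS
    have : v - T v - (u - T u) = 0 := by linarith
    rw [this]
    exact le_max_left _ _
end
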